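/- Let S be a proof-net in the sense of the partition switching which contains no terminal ⅋^k-link (for any nonzero k) and which contains n > 1 terminal C-links C₁,…,Cₙ (terminal ⊗-links being counted among the terminal C-links). If a terminal C-link with conclusion C_i(A_{i1},…,A_{im}) is non-splitting, then there exist a non-terminal node l with l ≠ C_i(A_{i1},…,A_{im}) and paths p₁,…,p_m which start from the node C_i(A_{i1},…,A_{im}), pass through A_{i1},…,A_{im} respectively, and all meet at l. -/

import Mathlib

/-! ## Partitions of `{1,…,n}`, meeting graphs, orthogonality (Danos–Regnier) -/

/-- A partition of `{1,…,n}`, represented as a `Finpartition` of `Fin n`. -/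
abbrev FinPartition (n : ℕ) := Finpartition (Finset.univ : Finset (Fin n))

/-- The (simple graph underlying the) meeting graph `G(p,q)` of two partitions of `{1,…,n}`:
its vertices are the classes of `p` together with the classes of `q`, and a class of `p` is
adjacent to a class of `q` iff some `i ∈ {1,…,n}` belongs to both (in the meeting multigraph
there is one edge for each such `i`). -/
def meetingGraph {n : ℕ} (p q : FinPartition n) :
    SimpleGraph ({c // c ∈ p.parts} ⊕ {d // d ∈ q.parts}) :=
  SimpleGraph.fromRel fun a b =>
    ∃ (c : {c // c ∈ p.parts}) (d : {d // d ∈ q.parts}),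
      ((c : Finset (Fin n)) ∩ (d : Finset (Fin n))).Nonempty ∧
      a = Sum.inl c ∧ b = Sum.inr d

/-- `p ⊥ q` : the meeting multigraph `G(p,q)` is connected and acyclic.  The meeting
multigraph has exactly `n` edges (one per element of `{1,…,n}`), and a connected multigraph
is acyclic iff its number of edges is exactly one less than its number of vertices; so
`G(p,q)` is connected and acyclic iff it is connected (equivalently, the underlying simple
graph is connected) and `n + 1 = (#classes of p) + (#classes of q)`. -/
def Finpartition.Orthogonal {n : ℕ} (p q : FinPartition n) : Prop :=
  (meetingGraph p q).Connected ∧ n + 1 = p.parts.card + q.parts.card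

/-- Orthogonality of two partition sets: `P ⊥ Q` iff `p ⊥ q` for all `p ∈ P`, `q ∈ Q`. -/
def orthSet {n : ℕ} (P Q : Set (FinPartition n)) : Prop :=
  ∀ p ∈ P, ∀ q ∈ Q, p.Orthogonal q

/-- `P^⊥`, the maximal partition set orthogonal to `P`. -/
def orthCompl {n : ℕ} (P : Set (FinPartition n)) : Set (FinPartition n) :=
  {q | ∀ p ∈ P, p.Orthogonal q}

/-- The partition set of `⊗ⁿ` : the single partition of `{1,…,n}` into singleton classes. -/
def IsTensorSet {n : ℕ} (R : Set (FinPartition n)) : Prop :=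
  R = {p : FinPartition n | ∀ c ∈ p.parts, c.card = 1}

/-- The partition set of `⅋ⁿ` : the single partition of `{1,…,n}` with one class. -/
def IsParSet {n : ℕ} (R : Set (FinPartition n)) : Prop :=
  R = {p : FinPartition n | p.parts = {Finset.univ}}

/-! ## Generalized multiplicative connectives and the sequent calculus `MLL(Cᵢ)` -/

/-- An `n`-ary generalized (multiplicative) connective `C` together with its dual `C*`:
a pair of nonempty finite partition sets of `{1,…,n}` with `(P_C)^⊥ = P_{C*}` and
`(P_{C*})^⊥ = P_C`.  `rules` is the partition set of the introduction (right) rules of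
`C`, and `dualRules` the one of its dual `C*`. -/
structure GenConn : Type where
  arity : ℕ
  rules : Set (FinPartition arity)
  dualRules : Set (FinPartition arity)
  rules_nonempty : rules.Nonempty
  rules_finite : rules.Finite
  dualRules_nonempty : dualRules.Nonempty
  dualRules_finite : dualRules.Finite
  orth : orthCompl rules = dualRules
  orth' : orthCompl dualRules = rules

/-- Formulas of `MLL(Cᵢ)`: built from atoms `P` and their duals `~P` by `⊗`, `⅋` and the
generalized connectives `Cᵢ` (with constructor `conn i`) and their duals `Cᵢ*` (with
constructor `dconn i`), where `i` ranges over a signature `I` and `Csig i` records the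
arity and the partition sets of `Cᵢ`. -/
inductive Formula (I : Type) (Csig : I → GenConn) : Type
  | pos : ℕ → Formula I Csig
  | neg : ℕ → Formula I Csig
  | tens : Formula I Csig → Formula I Csig → Formula I Csig
  | parr : Formula I Csig → Formula I Csig → Formula I Csig
  | conn : (i : I) → (Fin (Csig i).arity → Formula I Csig) → Formula I Csig
  | dconn : (i : I) → (Fin (Csig i).arity → Formula I Csig) → Formula I Csig

/-- The dual `~A` of a formula, extended by De Morgan and
`~(Cᵢ(A₁,…,Aₘ)) = Cᵢ*(~A₁,…,~Aₘ)`. -/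
def Formula.dual {I : Type} {Csig : I → GenConn} : Formula I Csig → Formula I Csig
  | .pos m => .neg m
  | .neg m => .pos m
  | .tens A B => .parr A.dual B.dual
  | .parr A B => .tens A.dual B.dual
  | .conn i A => .dconn i fun k => (A k).dual
  | .dconn i A => .conn i fun k => (A k).dual

/-- Provability in the one-sided sequent calculus `MLL(Cᵢ)` (sequents are multisets of
formulas).  The rules are the axiom `⊢ P, ~P` for atomic `P`, the cut rule (allowed only
when `cutEnabled = true`), the `⊗`- and `⅋`-rules of MLL, and, for each generalized
connective `Cᵢ` and each partition `p ∈ P_{Cᵢ}` with classes `c`, the introduction rule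
with premises `⊢ Γ_c, A_{c₁},…,A_{cₘ}` (one for each class `c` of `p`) and conclusion
`⊢ Γ₁,…,Γ_k, Cᵢ(A₁,…,Aₘ)`; dually for `Cᵢ*` using `p ∈ P_{Cᵢ*}`. -/
inductive Provable {I : Type} {Csig : I → GenConn} (cutEnabled : Bool) :
    Multiset (Formula I Csig) → Prop
  | ax (m : ℕ) : Provable cutEnabled {Formula.pos m, Formula.neg m}
  | cut (A : Formula I Csig) (Γ Δ : Multiset (Formula I Csig)) (hcut : cutEnabled = true) :
      Provable cutEnabled (A ::ₘ Γ) → Provable cutEnabled (A.dual ::ₘ Δ) →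
      Provable cutEnabled (Γ + Δ)
  | tens (A B : Formula I Csig) (Γ Δ : Multiset (Formula I Csig)) :
      Provable cutEnabled (A ::ₘ Γ) → Provable cutEnabled (B ::ₘ Δ) →
      Provable cutEnabled (Formula.tens A B ::ₘ (Γ + Δ))
  | parr (A B : Formula I Csig) (Γ : Multiset (Formula I Csig)) :
      Provable cutEnabled (A ::ₘ B ::ₘ Γ) →
      Provable cutEnabled (Formula.parr A B ::ₘ Γ)
  | conn (i : I) (A : Fin (Csig i).arity → Formula I Csig)
      (p : FinPartition (Csig i).arity) (hp : p ∈ (Csig i).rules)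
      (Γ : {c // c ∈ p.parts} → Multiset (Formula I Csig)) :
      (∀ c : {c // c ∈ p.parts},
        Provable cutEnabled (Γ c + Multiset.map A (c : Finset (Fin (Csig i).arity)).val)) →
      Provable cutEnabled (Formula.conn i A ::ₘ ∑ c : {c // c ∈ p.parts}, Γ c)
  | dconn (i : I) (A : Fin (Csig i).arity → Formula I Csig)
      (p : FinPartition (Csig i).arity) (hp : p ∈ (Csig i).dualRules)
      (Γ : {c // c ∈ p.parts} → Multiset (Formula I Csig)) :
      (∀ c : {c // c ∈ p.parts},
        Provable cutEnabled (Γ c + Multiset.map A (c : Finset (Fin (Csig i).arity)).val)) →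
      Provable cutEnabled (Formula.dconn i A ::ₘ ∑ c : {c // c ∈ p.parts}, Γ c)

/-! ## Proof structures for `MLL(Cᵢ)` -/

/-- The kinds of links of a proof-structure for `MLL(Cᵢ)`: axiom links, cut links,
`⊗`-links, `⅋`-links, `Cᵢ`-links and `Cᵢ*`-links. -/
inductive LinkKind (I : Type) : Type
  | ax : LinkKind I
  | cut : LinkKind I
  | tens : LinkKind I
  | parr : LinkKind I
  | conn : I → LinkKind I
  | dconn : I → LinkKind I

/-- The raw data of a proof-structure: a graph whose nodes are labelled by formulas and
whose edges are organized into links; each link has a kind, an (ordered) list of premise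
nodes and a list of conclusion nodes. -/
structure PrePS (I : Type) (Csig : I → GenConn) : Type 1 where
  Node : Type
  label : Node → Formula I Csig
  Link : Type
  kind : Link → LinkKind I
  prem : Link → List Node
  concl : Link → List Node

/-- A proof-structure for `MLL(Cᵢ)`: a nonempty finite graph of formula-labelled nodes
organized into axiom links (two conclusions `A` and `~A`, no premises), cut links (two
premises `A` and `~A`, no conclusion), `⊗`- and `⅋`-links, and `C`-links (premises
`A₁,…,Aₘ`, conclusion `Cᵢ(A₁,…,Aₘ)`, resp. `Cᵢ*(A₁,…,Aₘ)`), such that each node is the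
premise of at most one link and the conclusion of exactly one link. -/
structure ProofStructure (I : Type) (Csig : I → GenConn) : Type 1 where
  pre : PrePS I Csig
  node_finite : Finite pre.Node
  node_nonempty : Nonempty pre.Node
  link_finite : Finite pre.Link
  wf_ax : ∀ l, pre.kind l = .ax → pre.prem l = [] ∧
      ∃ a b, pre.concl l = [a, b] ∧ pre.label b = (pre.label a).dual
  wf_cut : ∀ l, pre.kind l = .cut → pre.concl l = [] ∧
      ∃ a b, pre.prem l = [a, b] ∧ pre.label b = (pre.label a).dual
  wf_tens : ∀ l, pre.kind l = .tens → ∃ a b c, pre.prem l = [a, b] ∧ pre.concl l = [c] ∧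
      pre.label c = .tens (pre.label a) (pre.label b)
  wf_parr : ∀ l, pre.kind l = .parr → ∃ a b c, pre.prem l = [a, b] ∧ pre.concl l = [c] ∧
      pre.label c = .parr (pre.label a) (pre.label b)
  wf_conn : ∀ l i, pre.kind l = .conn i →
      ∃ (args : Fin (Csig i).arity → pre.Node) (c : pre.Node),
        pre.prem l = List.ofFn args ∧ pre.concl l = [c] ∧
        pre.label c = .conn i fun k => pre.label (args k)
  wf_dconn : ∀ l i, pre.kind l = .dconn i →
      ∃ (args : Fin (Csig i).arity → pre.Node) (c : pre.Node),
        pre.prem l = List.ofFn args ∧ pre.concl l = [c] ∧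
        pre.label c = .dconn i fun k => pre.label (args k)
  prem_nodup : ∀ l, (pre.prem l).Nodup
  concl_nodup : ∀ l, (pre.concl l).Nodup
  concl_unique : ∀ v : pre.Node, ∃! l, v ∈ pre.concl l
  prem_unique : ∀ (v : pre.Node) (l l' : pre.Link),
      v ∈ pre.prem l → v ∈ pre.prem l' → l = l'

namespace PrePS

variable {I : Type} {Csig : I → GenConn}

/-- A node is terminal if it is the premise of no link. -/
def Terminal (S : PrePS I Csig) (v : S.Node) : Prop := ∀ l, v ∉ S.prem l

/-- A link is terminal if all its conclusions are terminal nodes. -/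
def TerminalLink (S : PrePS I Csig) (l : S.Link) : Prop :=
  ∀ v ∈ S.concl l, S.Terminal v

/-- The full graph of a proof-structure: the two conclusions of an axiom link are
adjacent, the two premises of a cut link are adjacent, and each premise of a link is
adjacent to each of its conclusions. -/
def fullGraph (S : PrePS I Csig) : SimpleGraph S.Node :=
  SimpleGraph.fromRel fun a b =>
    (∃ l, S.kind l = .ax ∧ S.concl l = [a, b]) ∨
    (∃ l, S.kind l = .cut ∧ S.prem l = [a, b]) ∨
    (∃ l, a ∈ S.prem l ∧ b ∈ S.concl l)

/-- A terminal link is splitting if removing its (conclusion) node and the incident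
edges separates the proof-structure into disjoint sub-proof-structures, i.e. the induced
graph on the remaining nodes is disconnected. -/
def Splitting (S : PrePS I Csig) (l : S.Link) : Prop :=
  ¬ (S.fullGraph.induce {v : S.Node | v ∉ S.concl l}).Connected

/-- A `⅋ᵏ`-link: a binary `⅋`-link, or a (dual) generalized-connective link whose
partition set is the one of `⅋ᵏ`. -/
def IsParLikeLink (S : PrePS I Csig) (l : S.Link) : Prop :=
  S.kind l = .parr ∨
  (∃ i, S.kind l = .conn i ∧ IsParSet (Csig i).rules) ∨
  (∃ i, S.kind l = .dconn i ∧ IsParSet (Csig i).dualRules)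

/-- A `C`-link (in the wide sense used for splitting): a `⊗`-link or a
generalized-connective link, which is not a `⅋ᵏ`-link. -/
def IsCLink (S : PrePS I Csig) (l : S.Link) : Prop :=
  (S.kind l = .tens ∨ (∃ i, S.kind l = .conn i) ∨ (∃ i, S.kind l = .dconn i)) ∧
  ¬ S.IsParLikeLink l

/-- The correctness graph determined by a selection `sel` of premise positions for each
link: the two conclusions of an axiom link are adjacent, the two premises of a cut link
are adjacent, and the `k`-th premise of a link is adjacent to its conclusion exactly when
`k ∈ sel l`. -/
def selGraph (S : PrePS I Csig) (sel : S.Link → Finset ℕ) : SimpleGraph S.Node :=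
  SimpleGraph.fromRel fun a b =>
    (∃ l, S.kind l = .ax ∧ S.concl l = [a, b]) ∨
    (∃ l, S.kind l = .cut ∧ S.prem l = [a, b]) ∨
    (∃ l, ∃ k ∈ sel l, (S.prem l)[k]? = some a ∧ b ∈ S.concl l)

end PrePS

/-- A transversal of a partition `p`: a set containing exactly one element of each class
of `p`. -/
def IsTransversal {m : ℕ} (p : FinPartition m) (t : Finset (Fin m)) : Prop :=
  ∀ c ∈ p.parts, ∃! x, x ∈ t ∧ x ∈ c

/-- A **partition switching** of a proof-structure: for each generalized-connective link
it selects a partition `p` in the corresponding partition set together with exactly one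
element of each class of `p` (the premise edges to the selected elements are kept, all
other premise edges of the link are deleted).  On a `⊗`-link both premise edges are kept
(the transversal of `{(1),(2)}`), on a `⅋`-link exactly one premise edge is kept
(a transversal of `{(1,2)}`). -/
structure PartitionSwitching {I : Type} {Csig : I → GenConn} (S : PrePS I Csig) where
  sel : S.Link → Finset ℕ
  valid_tens : ∀ l, S.kind l = .tens → sel l = {0, 1}
  valid_parr : ∀ l, S.kind l = .parr → sel l = {0} ∨ sel l = {1}
  valid_conn : ∀ l i, S.kind l = .conn i → ∃ p ∈ (Csig i).rules,
      ∃ t : Finset (Fin (Csig i).arity), IsTransversal p t ∧ sel l = t.image Fin.val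
  valid_dconn : ∀ l i, S.kind l = .dconn i → ∃ p ∈ (Csig i).dualRules,
      ∃ t : Finset (Fin (Csig i).arity), IsTransversal p t ∧ sel l = t.image Fin.val
  valid_other : ∀ l, S.kind l = .ax ∨ S.kind l = .cut → sel l = ∅

/-- A proof-structure is a **proof-net in the sense of the partition switching** iff for
every partition switching the associated correctness graph is connected and acyclic. -/
def PrePS.PartitionProofNet {I : Type} {Csig : I → GenConn} (S : PrePS I Csig) : Prop :=
  ∀ sw : PartitionSwitching S,
    (S.selGraph sw.sel).Connected ∧ (S.selGraph sw.sel).IsAcyclic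

section Aux

open SimpleGraph

lemma exists_transversal' {m : ℕ} (p : FinPartition m) : ∃ t, IsTransversal p t := by
  classical
  choose f hf using fun c : {c // c ∈ p.parts} => Finpartition.nonempty_of_mem_parts p c.2
  refine ⟨p.parts.attach.image f, ?_⟩
  intro c hc
  refine ⟨f ⟨c, hc⟩, ⟨Finset.mem_image.2 ⟨⟨c, hc⟩, Finset.mem_attach _ _, rfl⟩, hf _⟩, ?_⟩
  rintro x ⟨hxt, hxc⟩
  obtain ⟨d, -, rfl⟩ := Finset.mem_image.1 hxt
  obtain ⟨u, ⟨hu1, hu2⟩, hu⟩ := p.existsUnique_mem (a := f d) (Finset.mem_univ _)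
  have h1 : d.1 = u := hu _ ⟨d.2, hf d⟩
  have h2 : c = u := hu _ ⟨hc, hxc⟩
  congr 1
  exact Subtype.ext (h1.trans h2.symm)

noncomputable def pickPartSel {m : ℕ} {P : Set (FinPartition m)} (h : P.Nonempty) : Finset ℕ :=
  (exists_transversal' h.choose).choose.image Fin.val

lemma pickPartSel_spec {m : ℕ} {P : Set (FinPartition m)} (h : P.Nonempty) :
    ∃ p ∈ P, ∃ t, IsTransversal p t ∧ pickPartSel h = t.image Fin.val :=
  ⟨h.choose, h.choose_spec, (exists_transversal' h.choose).choose,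
    (exists_transversal' h.choose).choose_spec, rfl⟩

noncomputable def mkSwitching {I : Type} {Csig : I → GenConn} (S : PrePS I Csig) :
    PartitionSwitching S where
  sel l := match S.kind l with
    | .ax => ∅
    | .cut => ∅
    | .tens => {0, 1}
    | .parr => {0}
    | .conn i => pickPartSel (Csig i).rules_nonempty
    | .dconn i => pickPartSel (Csig i).dualRules_nonempty
  valid_tens l h := by simp only [h]
  valid_parr l h := by simp [h]
  valid_conn l i h := by simp only [h]; exact pickPartSel_spec _
  valid_dconn l i h := by simp only [h]; exact pickPartSel_spec _
  valid_other l h := by rcases h with h | h <;> simp only [h]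

end Aux
/-- **Sublemma for the splitting lemma** (cf. Laurent 2013, Lemma 2).  Let `S` be a
proof-net in the sense of the partition switching which contains no terminal `⅋ᵏ`-link
and which contains `n > 1` terminal `C`-links (terminal `⊗`-links being counted among the
terminal `C`-links).  If a terminal `C`-link with conclusion `Cᵢ(A_{i1},…,A_{im})` is
non-splitting, then there exist a non-terminal node `w` different from the node
`Cᵢ(A_{i1},…,A_{im})` and paths `p₁,…,p_m` which start from the node
`Cᵢ(A_{i1},…,A_{im})`, pass through `A_{i1},…,A_{im}` respectively, and all meet at
`w`. -/
theorem splitting_sublemma {I : Type} {Csig : I → GenConn}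
    (S : ProofStructure I Csig)
    (hnet : S.pre.PartitionProofNet)
    (hnopar : ∀ l, S.pre.IsParLikeLink l → ¬ S.pre.TerminalLink l)
    (hcount : 1 < {l : S.pre.Link | S.pre.IsCLink l ∧ S.pre.TerminalLink l}.ncard)
    (l : S.pre.Link) (hC : S.pre.IsCLink l) (hterm : S.pre.TerminalLink l)
    (c : S.pre.Node) (hc : S.pre.concl l = [c])
    (hnosplit : ¬ S.pre.Splitting l) :
    ∃ w : S.pre.Node, ¬ S.pre.Terminal w ∧ w ≠ c ∧
      ∀ a ∈ S.pre.prem l,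
        ∃ q : S.pre.fullGraph.Walk c w, q.IsPath ∧ a ∈ q.support := by
  classical
  have hcmem : c ∈ S.pre.concl l := by rw [hc]; exact List.mem_singleton_self c
  have hcterm : S.pre.Terminal c := hterm c hcmem
  -- the kind of `l` is tens / conn / dconn, in particular not ax and not cut
  have hknax : S.pre.kind l ≠ .ax := by
    rcases hC.1 with h | ⟨i, h⟩ | ⟨i, h⟩ <;> simp [h]
  have hkncut : S.pre.kind l ≠ .cut := by
    rcases hC.1 with h | ⟨i, h⟩ | ⟨i, h⟩ <;> simp [h]
  rcases hp : S.pre.prem l with _ | ⟨a₁, rest⟩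
  · -- `l` has no premises: then `c` is isolated in every correctness graph,
    -- contradicting connectedness (there is a second terminal C-link).
    exfalso
    set sw := mkSwitching S.pre with hsw
    obtain ⟨hconn, -⟩ := hnet sw
    have hiso : ∀ v, ¬ (S.pre.selGraph sw.sel).Adj c v := by
      intro v hadj
      rw [PrePS.selGraph, SimpleGraph.fromRel_adj] at hadj
      obtain ⟨hne, h | h⟩ := hadj <;>
        rcases h with ⟨l', hk, hcl⟩ | ⟨l', hk, hcl⟩ | ⟨l', k, hk, hpk, hcl⟩
      · have : l' = l := (S.concl_unique c).unique (by rw [hcl]; simp) hcmem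
        exact hknax (this ▸ hk)
      · exact hcterm l' (by rw [hcl]; simp)
      · exact hcterm l' (List.mem_of_getElem? hpk)
      · have : l' = l := (S.concl_unique c).unique (by rw [hcl]; simp) hcmem
        exact hknax (this ▸ hk)
      · exact hcterm l' (by rw [hcl]; simp)
      · have : l' = l := (S.concl_unique c).unique hcl hcmem
        rw [this, hp] at hpk
        simp at hpk
    -- a second terminal C-link gives a node distinct from `c`
    obtain ⟨l', ⟨hl'C, hl'term⟩, hl'ne⟩ :=
      Set.exists_ne_of_one_lt_ncard hcount l
    have : ∃ c', S.pre.concl l' = [c'] := by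
      rcases hl'C.1 with h | ⟨i, h⟩ | ⟨i, h⟩
      · obtain ⟨a, b, c', -, h2, -⟩ := S.wf_tens l' h; exact ⟨c', h2⟩
      · obtain ⟨args, c', -, h2, -⟩ := S.wf_conn l' i h; exact ⟨c', h2⟩
      · obtain ⟨args, c', -, h2, -⟩ := S.wf_dconn l' i h; exact ⟨c', h2⟩
    obtain ⟨c', hc'⟩ := this
    have hcc' : c ≠ c' := by
      intro h
      exact hl'ne ((S.concl_unique c).unique (by rw [hc', ← h]; simp) hcmem)
    obtain ⟨wlk⟩ := hconn.preconnected c c'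
    cases wlk with
    | nil => exact hcc' rfl
    | cons h p => exact hiso _ h
  · -- `l` has a first premise `a₁`; take `w := a₁`
    have ha₁ : a₁ ∈ S.pre.prem l := by rw [hp]; simp
    rw [PrePS.Splitting, not_not] at hnosplit
    have hmem : ∀ a ∈ S.pre.prem l, a ∈ {v : S.pre.Node | v ∉ S.pre.concl l} := by
      intro a ha hamem
      have : a = c := by rw [hc] at hamem; simpa using hamem
      exact hcterm l (this ▸ ha)
    refine ⟨a₁, fun h => h l ha₁, fun h => hcterm l (h ▸ ha₁), ?_⟩
    intro a ha0
    have ha : a ∈ S.pre.prem l := by rw [hp]; exact ha0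
    have has := hmem a ha
    have ha₁s := hmem a₁ ha₁
    obtain ⟨wlk⟩ := hnosplit.preconnected ⟨a, has⟩ ⟨a₁, ha₁s⟩
    set P := wlk.toPath with hP
    set f := (SimpleGraph.Embedding.induce (G := S.pre.fullGraph)
      {v : S.pre.Node | v ∉ S.pre.concl l}) with hf
    have hadj : S.pre.fullGraph.Adj c a := by
      rw [PrePS.fullGraph, SimpleGraph.fromRel_adj]
      exact ⟨fun h => has (h ▸ hcmem), Or.inr (Or.inr (Or.inr ⟨l, ha, hcmem⟩))⟩
    have hcns : c ∉ (P.1.map f.toHom).support := by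
      rw [SimpleGraph.Walk.support_map]
      intro hmem'
      obtain ⟨x, -, hx⟩ := List.mem_map.1 hmem'
      have hxc : (x : S.pre.Node) = c := hx
      exact x.2 (hxc ▸ hcmem)
    refine ⟨SimpleGraph.Walk.cons hadj (P.1.map f.toHom), ?_, ?_⟩
    · exact (SimpleGraph.Walk.map_isPath_of_injective f.injective P.2).cons hcns
    · show a ∈ c :: (P.1.map f.toHom).support
      exact List.mem_cons_of_mem _ (SimpleGraph.Walk.start_mem_support _)
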